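/- Let α ∈ {0,1}, let s and k be integers with s ≥ 1−α and k ≥ s+α, and let λ ∈ ℚ. Define A_{α,s,k}(λ) = Σ_{p=α}^{k} (−1)^p · C(k−s−p−1, p−α) · F_{k−p, s+α−1, p+1−2α}(λ). Then: if α = 0, A_{0,s,k}(λ) = Σ_{q=0}^{s} (−1)^q·(k+1−q)/(q!·(s−q)!) · Q_{q,s−1}(k+1−q, λ); and if α = 1, A_{1,s,k}(λ) = Σ_{q=0}^{s} (−1)^{q+1}/(q!·(s−q)!) · Q_{q,s}(k−1−q, λ). Consequently, for each fixed α, s and λ there is a polynomial P ∈ ℚ[x] of degree at most s, whose coefficient of x^s equals (−1)^α·(2−λ)^s/s!, with A_{α,s,k}(λ) = P(k) for all integers k ≥ s+α. -/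

import Mathlib

open Finset Polynomial

/-- Falling factorial `x(x-1)⋯(x-n+1)` in `ℚ`. -/
def ffall (x : ℚ) (n : ℕ) : ℚ := ∏ i ∈ Finset.range n, (x - (i : ℚ))

/-- Generalized binomial coefficient: `C(x, n) = x(x-1)⋯(x-n+1)/n!` for `n ≥ 0`,
and `C(x, n) = 0` for `n < 0`. -/
def gchoose (x : ℚ) (n : ℤ) : ℚ :=
  if 0 ≤ n then ffall x n.toNat / ((n.toNat).factorial : ℚ) else 0

/-- `F_{ℓ,a,b}(λ) = ∑_{r=0}^{ℓ} λ^r C(ℓ-a-b-1, r) C(b, ℓ-r)`. -/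
def Ffun (l a b : ℕ) (lam : ℚ) : ℚ :=
  ∑ r ∈ Finset.range (l + 1),
    lam ^ r * gchoose ((l : ℚ) - a - b - 1) r * (b.choose (l - r) : ℚ)

/-- `Q_{ℓ,a}(b,λ) = ∑_{m=0}^{min(a,ℓ)} C(a,m) ((a+b-ℓ)↓(a-m)) (ℓ↓m) λ^m (λ-1)^(ℓ-m)`. -/
def Qfun (l a : ℕ) (b lam : ℚ) : ℚ :=
  ∑ m ∈ Finset.range (min a l + 1),
    (a.choose m : ℚ) * ffall ((a : ℚ) + b - l) (a - m) * ffall (l : ℚ) m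
      * lam ^ m * (lam - 1) ^ (l - m)

/-- `A_{α,s,k}(λ) = ∑_{p=α}^{k} (-1)^p C(k-s-p-1, p-α) F_{k-p, s+α-1, p+1-2α}(λ)`. -/
def Afun (α s k : ℕ) (lam : ℚ) : ℚ :=
  ∑ p ∈ Finset.Icc α k,
    (-1 : ℚ) ^ p * gchoose ((k : ℚ) - s - p - 1) ((p : ℤ) - α)
      * Ffun (k - p) (s + α - 1) (p + 1 - 2 * α) lam

lemma ffall_succ (x : ℚ) (n : ℕ) : ffall x (n+1) = ffall x n * (x - n) := by
  rw [ffall, Finset.prod_range_succ, ← ffall]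

lemma ffall_natCast (n m : ℕ) : ffall (n:ℚ) m = (n.descFactorial m : ℚ) := by
  induction m with
  | zero => simp [ffall]
  | succ m ih =>
    rw [ffall_succ, ih, Nat.descFactorial_succ]
    rcases le_or_gt m n with h | h
    · push_cast [h]; ring
    · rw [Nat.descFactorial_of_lt h]; simp [Nat.sub_eq_zero_of_le h.le]

lemma ffall_neg (m n : ℕ) : ffall (-(m:ℚ) - 1) n = (-1)^n * ((m+n).descFactorial n : ℚ) := by
  induction n with
  | zero => simp [ffall]
  | succ n ih =>
    have h : m + (n+1) = (m+n) + 1 := by omega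
    rw [ffall_succ, ih, h, Nat.succ_descFactorial_succ]
    push_cast; ring

lemma gchoose_natCast (N n : ℕ) : gchoose (N:ℚ) (n:ℤ) = (N.choose n : ℚ) := by
  rw [gchoose, if_pos (Int.natCast_nonneg n)]
  rw [Int.toNat_natCast, ffall_natCast, Nat.descFactorial_eq_factorial_mul_choose]
  push_cast
  rw [mul_comm, mul_div_assoc, div_self (by positivity), mul_one]

lemma gchoose_neg (m n : ℕ) : gchoose (-(m:ℚ)-1) (n:ℤ) = (-1)^n * ((m+n).choose n : ℚ) := by
  rw [gchoose, if_pos (Int.natCast_nonneg n)]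
  rw [Int.toNat_natCast, ffall_neg, Nat.descFactorial_eq_factorial_mul_choose]
  push_cast
  rw [mul_div_assoc, mul_comm ((n.factorial : ℚ)) _, mul_div_assoc, div_self (by positivity), mul_one]

lemma sum_triangle (q : ℕ) (g : ℕ → ℕ → ℚ) :
    ∑ m ∈ range (q+1), ∑ t ∈ range (q+1-m), g m t
      = ∑ r ∈ range (q+1), ∑ m ∈ range (r+1), g m (r-m) := by
  induction q with
  | zero => simp
  | succ q ih =>
    rw [Finset.sum_range_succ (f := fun r => ∑ m ∈ range (r+1), g m (r-m))]
    rw [← ih]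
    rw [Finset.sum_range_succ (f := fun m => ∑ t ∈ range (q+1+1-m), g m t)]
    have h1 : ∀ m ∈ range (q+1), ∑ t ∈ range (q+1+1-m), g m t
        = (∑ t ∈ range (q+1-m), g m t) + g m (q+1-m) := by
      intro m hm
      rw [mem_range] at hm
      have : q+1+1-m = (q+1-m)+1 := by omega
      rw [this, Finset.sum_range_succ]
    rw [Finset.sum_congr rfl h1, Finset.sum_add_distrib]
    have h2 : q+1+1-(q+1) = 1 := by omega
    have h3 : ∑ m ∈ range (q+1+1), g m (q+1-m)
        = (∑ m ∈ range (q+1), g m (q+1-m)) + g (q+1) 0 := by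
      rw [Finset.sum_range_succ, Nat.sub_self]
    rw [h2, Finset.sum_range_one, h3]
    ring

lemma keyA (m e f : ℕ) :
    ((m+e+f).descFactorial m : ℚ) * ((e+f).choose e : ℚ)
      = ((m+e+f).choose (m+e) : ℚ) * ((m+e).descFactorial m : ℚ) := by
  rw [Nat.descFactorial_eq_factorial_mul_choose, Nat.descFactorial_eq_factorial_mul_choose]
  push_cast
  rw [Nat.cast_choose ℚ (show m ≤ m+e+f by omega), Nat.cast_choose ℚ (show e ≤ e+f by omega),
    Nat.cast_choose ℚ (show m+e ≤ m+e+f by omega), Nat.cast_choose ℚ (show m ≤ m+e by omega)]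
  have h1 : m+e+f-m = e+f := by omega
  have h2 : e+f-e = f := by omega
  have h3 : m+e+f-(m+e) = f := by omega
  have h4 : m+e-m = e := by omega
  rw [h1, h2, h3, h4]
  field_simp

lemma keyB (N r a : ℕ) :
    ∑ m ∈ range (a+1), (a.choose m) * (r.descFactorial m) * (N.descFactorial (a-m))
      = ((r+N).descFactorial a) := by
  rw [Nat.descFactorial_eq_factorial_mul_choose, Nat.add_choose_eq,
    Finset.Nat.sum_antidiagonal_eq_sum_range_succ_mk, Finset.mul_sum]
  refine Finset.sum_congr rfl ?_
  intro m hm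
  rw [mem_range] at hm
  rw [Nat.descFactorial_eq_factorial_mul_choose, Nat.descFactorial_eq_factorial_mul_choose]
  rw [← Nat.choose_mul_factorial_mul_factorial (show m ≤ a by omega)]
  ring

lemma sum_range_ext {f : ℕ → ℚ} {u v : ℕ} (huv : u ≤ v) (h : ∀ m, u ≤ m → f m = 0) :
    ∑ m ∈ range v, f m = ∑ m ∈ range u, f m := by
  refine (Finset.sum_subset (Finset.range_subset_range.2 huv) ?_).symm
  intro m hm hnm
  rw [mem_range] at hnm
  exact h m (by omega)

lemma Qfun_eq (a q N : ℕ) (lam : ℚ) :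
    Qfun q a ((N:ℚ) + q - a) lam
      = ∑ r ∈ range (q+1),
          (q.choose r : ℚ) * lam^r * (-1)^(q-r) * ((r+N).descFactorial a : ℚ) := by
  rw [Qfun]
  have harg : (a:ℚ) + ((N:ℚ) + q - a) - q = (N:ℚ) := by ring
  set T : ℕ → ℚ := fun m => (a.choose m : ℚ) * (N.descFactorial (a-m) : ℚ)
      * (q.descFactorial m : ℚ) * lam^m * (lam-1)^(q-m) with hT
  have step1 : ∀ m ∈ range (min a q + 1),
      (a.choose m : ℚ) * ffall ((a:ℚ) + ((N:ℚ)+(q:ℚ)-(a:ℚ)) - q) (a-m) * ffall (q:ℚ) m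
        * lam^m * (lam-1)^(q-m) = T m := by
    intro m _
    rw [harg, ffall_natCast, ffall_natCast, hT]
  rw [Finset.sum_congr rfl step1]
  have ext : ∑ m ∈ range (min a q + 1), T m = ∑ m ∈ range (q+1), T m := by
    rcases le_or_gt a q with h | h
    · have hmin : a ⊓ q = a := by omega
      rw [hmin]
      refine (sum_range_ext (by omega) ?_).symm
      intro m hm
      have h2 : a < m := by omega
      simp [hT, Nat.choose_eq_zero_of_lt h2]
    · have hmin : a ⊓ q = q := by omega
      rw [hmin]
  rw [ext]
  set g : ℕ → ℕ → ℚ := fun m t => (a.choose m : ℚ) * (N.descFactorial (a-m) : ℚ)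
      * (q.descFactorial m : ℚ) * lam^m
      * (lam^t * (-1:ℚ)^(q-m-t) * ((q-m).choose t : ℚ)) with hg
  have expand : ∀ m ∈ range (q+1), T m = ∑ t ∈ range (q+1-m), g m t := by
    intro m hm
    rw [mem_range] at hm
    have hq1 : q+1-m = (q-m)+1 := by omega
    rw [hT, hg, hq1]
    simp only [sub_eq_add_neg lam 1]
    rw [add_pow]
    rw [Finset.mul_sum]
  rw [Finset.sum_congr rfl expand, sum_triangle q g]
  refine Finset.sum_congr rfl ?_
  intro r hr
  rw [mem_range] at hr
  have step : ∀ m ∈ range (r+1), g m (r-m)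
      = ((q.choose r : ℚ) * lam^r * (-1:ℚ)^(q-r))
        * ((a.choose m : ℚ) * (r.descFactorial m : ℚ) * (N.descFactorial (a-m) : ℚ)) := by
    intro m hm
    rw [mem_range] at hm
    have e2 : q-m-(r-m) = q-r := by omega
    have e3 := keyA m (r-m) (q-r)
    have e4 : m+(r-m)+(q-r) = q := by omega
    have e5 : m+(r-m) = r := by omega
    have e6 : (r-m)+(q-r) = q-m := by omega
    rw [e4, e5, e6] at e3
    have e1 : lam^r = lam^m * lam^(r-m) := by rw [← pow_add]; congr 1; omega
    have hgapp : g m (r-m) = (a.choose m : ℚ) * (N.descFactorial (a-m) : ℚ)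
        * (q.descFactorial m : ℚ) * lam^m
        * (lam^(r-m) * (-1:ℚ)^(q-m-(r-m)) * ((q-m).choose (r-m) : ℚ)) := rfl
    rw [hgapp, e2, e1]
    linear_combination ((a.choose m : ℚ) * (N.descFactorial (a-m) : ℚ) * lam^m * lam^(r-m)
      * (-1:ℚ)^(q-r)) * e3
  rw [Finset.sum_congr rfl step, ← Finset.mul_sum]
  have hkB : (∑ m ∈ range (a+1),
      ((a.choose m : ℚ) * (r.descFactorial m : ℚ) * (N.descFactorial (a-m) : ℚ)))
      = ((r+N).descFactorial a : ℚ) := by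
    exact_mod_cast congrArg (Nat.cast (R := ℚ)) (keyB N r a)
  have hswitch : ∑ m ∈ range (r+1),
      ((a.choose m : ℚ) * (r.descFactorial m : ℚ) * (N.descFactorial (a-m) : ℚ))
      = ∑ m ∈ range (a+1),
      ((a.choose m : ℚ) * (r.descFactorial m : ℚ) * (N.descFactorial (a-m) : ℚ)) := by
    rcases le_total (r+1) (a+1) with h | h
    · refine (sum_range_ext h ?_).symm
      intro m hm
      rw [Nat.descFactorial_of_lt (show r < m by omega)]
      push_cast; ring
    · refine sum_range_ext h ?_
      intro m hm
      rw [Nat.choose_eq_zero_of_lt (show a < m by omega)]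
      push_cast; ring
  rw [hswitch, hkB]

lemma Ared0 (s k : ℕ) (hs : 1 ≤ s) (hk : s ≤ k) (lam : ℚ) :
    Afun 0 s k lam = ∑ j ∈ range (s+1), ∑ r ∈ range (j+1),
      (-lam)^r * ((k+s-2*j).choose (s-j) : ℚ) * ((k+s-2*j+r).choose r : ℚ)
        * ((k-j+1).choose (j-r) : ℚ) := by
  have hA : Afun 0 s k lam = ∑ p ∈ Finset.Icc 0 k,
      (-1:ℚ)^p * gchoose ((k:ℚ) - s - p - 1) (p:ℤ) * Ffun (k-p) (s-1) (p+1) lam := by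
    rw [Afun]
    norm_num
  rw [hA]
  set T : ℕ → ℚ := fun p =>
    (-1:ℚ)^p * gchoose ((k:ℚ) - s - p - 1) (p:ℤ) * Ffun (k-p) (s-1) (p+1) lam with hT
  have hsub : Finset.Icc (k-s) k ⊆ Finset.Icc 0 k := by
    intro p hp; rw [mem_Icc] at *; omega
  have hvan : ∀ p ∈ Finset.Icc 0 k, p ∉ Finset.Icc (k-s) k → T p = 0 := by
    intro p hp hnp
    rw [mem_Icc] at hp
    rw [mem_Icc] at hnp
    have hpk : p + s < k := by omega
    set N := k - s - p - 1 with hNdef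
    have h1 : N + (s+p+1) = k := by omega
    have hc : (k:ℚ) - s - p - 1 = (N:ℚ) := by
      have h2 := congrArg (Nat.cast (R := ℚ)) h1
      push_cast at h2
      linarith
    rw [hT]
    simp only [hc, gchoose_natCast]
    rcases lt_or_ge N p with h | h
    · rw [Nat.choose_eq_zero_of_lt h]
      simp
    · have hF : Ffun (k-p) (s-1) (p+1) lam = 0 := by
        rw [Ffun]
        refine Finset.sum_eq_zero ?_
        intro r hr
        rw [mem_range] at hr
        set c2 := N - p with hc2
        have h3 : c2 + (s + 2*p + 1) = k := by omega
        have hcc : ((k-p:ℕ):ℚ) - ((s-1:ℕ):ℚ) - ((p+1:ℕ):ℚ) - 1 = (c2:ℚ) := by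
          have e1 : ((k-p:ℕ):ℚ) = (k:ℚ) - p := by
            rw [Nat.cast_sub (by omega)]
          have e2 : ((s-1:ℕ):ℚ) = (s:ℚ) - 1 := by
            rw [Nat.cast_sub (by omega)]; norm_num
          have e3 := congrArg (Nat.cast (R := ℚ)) h3
          push_cast at e3
          push_cast [e1, e2]
          linarith
        rw [hcc, gchoose_natCast]
        rcases lt_or_ge c2 r with h4 | h4
        · rw [Nat.choose_eq_zero_of_lt h4]
          ring
        · rw [Nat.choose_eq_zero_of_lt (show p+1 < (k-p)-r by omega)]
          ring
      rw [hF]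
      ring
  rw [← Finset.sum_subset hsub hvan]
  have hbij : ∑ p ∈ Finset.Icc (k-s) k, T p = ∑ j ∈ range (s+1), T (k-j) := by
    refine Finset.sum_nbij' (fun p => k - p) (fun j => k - j) ?_ ?_ ?_ ?_ ?_
    · intro a ha; rw [mem_Icc] at ha; rw [mem_range]; beta_reduce; omega
    · intro b hb; rw [mem_range] at hb; rw [mem_Icc]; beta_reduce; omega
    · intro a ha; rw [mem_Icc] at ha; beta_reduce; omega
    · intro b hb; rw [mem_range] at hb; beta_reduce; omega
    · intro a ha
      rw [mem_Icc] at ha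
      beta_reduce
      congr 1
      omega
  rw [hbij]
  refine Finset.sum_congr rfl ?_
  intro j hj
  rw [mem_range] at hj
  have hjs : j ≤ s := by omega
  have hjk : j ≤ k := by omega
  show (-1:ℚ)^(k-j) * gchoose ((k:ℚ) - s - ((k-j:ℕ):ℚ) - 1) ((k-j:ℕ):ℤ)
      * Ffun (k-(k-j)) (s-1) ((k-j)+1) lam = _
  have e0 : k - (k-j) = j := by omega
  have e1 : (k:ℚ) - s - ((k-j:ℕ):ℚ) - 1 = -(((s-j:ℕ)):ℚ) - 1 := by
    rw [Nat.cast_sub hjk, Nat.cast_sub hjs]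
    ring
  have e2 : ((k-j:ℕ):ℤ) = ((k-j:ℕ):ℤ) := rfl
  rw [e0, e1, gchoose_neg]
  have e3 : (s-j) + (k-j) = k+s-2*j := by omega
  rw [e3]
  have e4 : (k+s-2*j).choose (k-j) = (k+s-2*j).choose (s-j) := by
    have e5 : k+s-2*j-(s-j) = k-j := by omega
    rw [← e5, Nat.choose_symm (by omega)]
  rw [e4]
  have hFf : Ffun j (s-1) (k-j+1) lam = ∑ r ∈ range (j+1),
      (-lam)^r * ((k+s-2*j+r).choose r : ℚ) * ((k-j+1).choose (j-r) : ℚ) := by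
    rw [Ffun]
    refine Finset.sum_congr rfl ?_
    intro r hr
    rw [mem_range] at hr
    have hcc : (j:ℚ) - ((s-1:ℕ):ℚ) - ((k-j+1:ℕ):ℚ) - 1 = -(((k+s-2*j:ℕ)):ℚ) - 1 := by
      rw [Nat.cast_sub (by omega : 1 ≤ s), Nat.cast_sub (by omega : 2*j ≤ k+s)]
      push_cast [Nat.cast_sub hjk]
      ring
    rw [hcc, gchoose_neg]
    have e6 : k+s-2*j+r = k+s-2*j+r := rfl
    rw [neg_pow lam r]
    ring
  rw [hFf, Finset.mul_sum]
  refine Finset.sum_congr rfl ?_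
  intro r hr
  have hsign : (-1:ℚ)^(k-j) * ((-1:ℚ)^(k-j)) = 1 := by
    rw [← mul_pow]; norm_num
  linear_combination ((-lam)^r * ((k+s-2*j).choose (s-j) : ℚ)
    * ((k+s-2*j+r).choose r : ℚ) * ((k-j+1).choose (j-r) : ℚ)) * hsign

lemma Ared1 (s k : ℕ) (hk : s + 1 ≤ k) (lam : ℚ) :
    Afun 1 s k lam = ∑ j ∈ range (s+1), ∑ r ∈ range (j+1),
      -((-lam)^r * ((k+s-2*j-1).choose (s-j) : ℚ) * ((k+s-2*j-1+r).choose r : ℚ)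
        * ((k-j-1).choose (j-r) : ℚ)) := by
  have hA : Afun 1 s k lam = ∑ p ∈ Finset.Icc 1 k,
      (-1:ℚ)^p * gchoose ((k:ℚ) - s - p - 1) ((p:ℤ) - 1) * Ffun (k-p) s (p+1-2) lam := by
    rw [Afun]
    norm_num
  rw [hA]
  set T : ℕ → ℚ := fun p =>
    (-1:ℚ)^p * gchoose ((k:ℚ) - s - p - 1) ((p:ℤ) - 1) * Ffun (k-p) s (p+1-2) lam with hT
  have hsub : Finset.Icc (k-s) k ⊆ Finset.Icc 1 k := by
    intro p hp; rw [mem_Icc] at *; omega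
  have hvan : ∀ p ∈ Finset.Icc 1 k, p ∉ Finset.Icc (k-s) k → T p = 0 := by
    intro p hp hnp
    rw [mem_Icc] at hp
    rw [mem_Icc] at hnp
    have hpk : p + s < k := by omega
    have hp1 : 1 ≤ p := hp.1
    set N := k - s - p - 1 with hNdef
    have h1 : N + (s+p+1) = k := by omega
    have hc : (k:ℚ) - s - p - 1 = (N:ℚ) := by
      have h2 := congrArg (Nat.cast (R := ℚ)) h1
      push_cast at h2
      linarith
    have hip : (p:ℤ) - 1 = ((p-1:ℕ):ℤ) := by omega
    rw [hT]
    show (-1:ℚ)^p * gchoose ((k:ℚ) - s - p - 1) ((p:ℤ) - 1) * Ffun (k-p) s (p+1-2) lam = 0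
    rw [hc, hip, gchoose_natCast]
    rcases lt_or_ge N (p-1) with h | h
    · rw [Nat.choose_eq_zero_of_lt h]
      simp
    · have hF : Ffun (k-p) s (p+1-2) lam = 0 := by
        rw [Ffun]
        refine Finset.sum_eq_zero ?_
        intro r hr
        rw [mem_range] at hr
        have hb : p+1-2 = p-1 := by omega
        rw [hb]
        set c2 := k - s - 2*p with hc2
        have h3 : c2 + (s + 2*p) = k := by omega
        have hcc : ((k-p:ℕ):ℚ) - (s:ℚ) - ((p-1:ℕ):ℚ) - 1 = (c2:ℚ) := by
          rw [Nat.cast_sub (by omega : p ≤ k), Nat.cast_sub (by omega : 1 ≤ p)]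
          have e3 := congrArg (Nat.cast (R := ℚ)) h3
          push_cast at e3
          push_cast
          linarith
        rw [hcc, gchoose_natCast]
        rcases lt_or_ge c2 r with h4 | h4
        · rw [Nat.choose_eq_zero_of_lt h4]
          ring
        · rw [Nat.choose_eq_zero_of_lt (show p-1 < (k-p)-r by omega)]
          ring
      rw [hF]
      ring
  rw [← Finset.sum_subset hsub hvan]
  have hbij : ∑ p ∈ Finset.Icc (k-s) k, T p = ∑ j ∈ range (s+1), T (k-j) := by
    refine Finset.sum_nbij' (fun p => k - p) (fun j => k - j) ?_ ?_ ?_ ?_ ?_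
    · intro a ha; rw [mem_Icc] at ha; rw [mem_range]; beta_reduce; omega
    · intro b hb; rw [mem_range] at hb; rw [mem_Icc]; beta_reduce; omega
    · intro a ha; rw [mem_Icc] at ha; beta_reduce; omega
    · intro b hb; rw [mem_range] at hb; beta_reduce; omega
    · intro a ha
      rw [mem_Icc] at ha
      beta_reduce
      congr 1
      omega
  rw [hbij]
  refine Finset.sum_congr rfl ?_
  intro j hj
  rw [mem_range] at hj
  have hjs : j ≤ s := by omega
  have hjk : j + 1 ≤ k := by omega
  show (-1:ℚ)^(k-j) * gchoose ((k:ℚ) - s - ((k-j:ℕ):ℚ) - 1) (((k-j:ℕ):ℤ) - 1)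
      * Ffun (k-(k-j)) s ((k-j)+1-2) lam = _
  have e0 : k - (k-j) = j := by omega
  have eb : (k-j)+1-2 = k-j-1 := by omega
  have e1 : (k:ℚ) - s - ((k-j:ℕ):ℚ) - 1 = -(((s-j:ℕ)):ℚ) - 1 := by
    rw [Nat.cast_sub (by omega : j ≤ k), Nat.cast_sub hjs]
    ring
  have hip : ((k-j:ℕ):ℤ) - 1 = ((k-j-1:ℕ):ℤ) := by omega
  rw [e0, eb, e1, hip, gchoose_neg]
  have e3 : (s-j) + (k-j-1) = k+s-2*j-1 := by omega
  rw [e3]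
  have e4 : (k+s-2*j-1).choose (k-j-1) = (k+s-2*j-1).choose (s-j) := by
    have e5 : k+s-2*j-1-(s-j) = k-j-1 := by omega
    rw [← e5, Nat.choose_symm (by omega)]
  rw [e4]
  have hFf : Ffun j s (k-j-1) lam = ∑ r ∈ range (j+1),
      (-lam)^r * ((k+s-2*j-1+r).choose r : ℚ) * ((k-j-1).choose (j-r) : ℚ) := by
    rw [Ffun]
    refine Finset.sum_congr rfl ?_
    intro r hr
    rw [mem_range] at hr
    have hcc : (j:ℚ) - (s:ℚ) - ((k-j-1:ℕ):ℚ) - 1 = -(((k+s-2*j-1:ℕ)):ℚ) - 1 := by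
      rw [Nat.cast_sub (by omega : 1 ≤ k-j), Nat.cast_sub (by omega : j ≤ k),
        Nat.cast_sub (by omega : 1 ≤ k+s-2*j), Nat.cast_sub (by omega : 2*j ≤ k+s)]
      push_cast
      ring
    rw [hcc, gchoose_neg, neg_pow lam r]
    ring
  rw [hFf, Finset.mul_sum]
  refine Finset.sum_congr rfl ?_
  intro r hr
  have hsign : (-1:ℚ)^(k-j) * ((-1:ℚ)^(k-j-1)) = -1 := by
    rw [← pow_add, show (k-j) + (k-j-1) = 2*(k-j-1)+1 by omega, pow_succ, pow_mul]
    norm_num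
  linear_combination ((-lam)^r * ((k+s-2*j-1).choose (s-j) : ℚ)
    * ((k+s-2*j-1+r).choose r : ℚ) * ((k-j-1).choose (j-r) : ℚ)) * hsign

lemma key0' (r e f d g u : ℕ) (h1 : e+g = d+f+1) (h3 : u+g = 2*f+d+r) :
    ((2*f+d).choose f : ℚ) * ((2*f+d+r).choose r : ℚ) * ((e+g).choose e : ℚ)
      = ((d:ℚ)+f+1)/(((r+e).factorial : ℚ) * (f.factorial : ℚ)) * ((r+e).choose r : ℚ)
        * (((2*f+d+r).descFactorial u : ℚ)) := by
  rw [Nat.descFactorial_eq_factorial_mul_choose]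
  push_cast
  rw [Nat.cast_choose ℚ (show f ≤ 2*f+d by omega),
    Nat.cast_choose ℚ (show r ≤ 2*f+d+r by omega),
    Nat.cast_choose ℚ (show e ≤ e+g by omega),
    Nat.cast_choose ℚ (show r ≤ r+e by omega),
    Nat.cast_choose ℚ (show u ≤ 2*f+d+r by omega)]
  rw [show 2*f+d-f = f+d by omega, show 2*f+d+r-r = 2*f+d by omega,
    show e+g-e = g by omega, show r+e-r = e by omega, show 2*f+d+r-u = g by omega]
  rw [show e+g = (d+f)+1 from by omega]
  rw [Nat.factorial_succ (d+f)]
  have hfd : ((d:ℚ)+f+1) = (((d+f)+1 : ℕ) : ℚ) := by push_cast; ring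
  have n1 : (((f+d).factorial : ℚ)) ≠ 0 := Nat.cast_ne_zero.mpr (Nat.factorial_ne_zero _)
  have n2 : ((f.factorial : ℚ)) ≠ 0 := Nat.cast_ne_zero.mpr (Nat.factorial_ne_zero _)
  have n3 : ((r.factorial : ℚ)) ≠ 0 := Nat.cast_ne_zero.mpr (Nat.factorial_ne_zero _)
  have n4 : ((e.factorial : ℚ)) ≠ 0 := Nat.cast_ne_zero.mpr (Nat.factorial_ne_zero _)
  have n5 : ((g.factorial : ℚ)) ≠ 0 := Nat.cast_ne_zero.mpr (Nat.factorial_ne_zero _)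
  have n6 : ((u.factorial : ℚ)) ≠ 0 := Nat.cast_ne_zero.mpr (Nat.factorial_ne_zero _)
  have n7 : (((2*f+d).factorial : ℚ)) ≠ 0 := Nat.cast_ne_zero.mpr (Nat.factorial_ne_zero _)
  have n8 : (((d+f).factorial : ℚ)) ≠ 0 := Nat.cast_ne_zero.mpr (Nat.factorial_ne_zero _)
  have n9 : (((r+e).factorial : ℚ)) ≠ 0 := Nat.cast_ne_zero.mpr (Nat.factorial_ne_zero _)
  push_cast
  have hdf : (((d+f).factorial : ℚ)) = (((f+d).factorial : ℚ)) := by rw [Nat.add_comm d f]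
  field_simp
  rw [hdf]
lemma key1' (r e f d g : ℕ) (h1 : e+g = d+f) :
    ((2*f+d).choose f : ℚ) * ((2*f+d+r).choose r : ℚ) * ((e+g).choose e : ℚ)
      = 1/(((r+e).factorial : ℚ) * (f.factorial : ℚ)) * ((r+e).choose r : ℚ)
        * (((2*f+d+r).descFactorial (r+e+f) : ℚ)) := by
  rw [Nat.descFactorial_eq_factorial_mul_choose]
  push_cast
  rw [Nat.cast_choose ℚ (show f ≤ 2*f+d by omega),
    Nat.cast_choose ℚ (show r ≤ 2*f+d+r by omega),
    Nat.cast_choose ℚ (show e ≤ e+g by omega),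
    Nat.cast_choose ℚ (show r ≤ r+e by omega),
    Nat.cast_choose ℚ (show r+e+f ≤ 2*f+d+r by omega)]
  rw [show 2*f+d-f = f+d by omega, show 2*f+d+r-r = 2*f+d by omega,
    show e+g-e = g by omega, show r+e-r = e by omega, show 2*f+d+r-(r+e+f) = g by omega]
  rw [show e+g = d+f from h1]
  have n1 : (((f+d).factorial : ℚ)) ≠ 0 := Nat.cast_ne_zero.mpr (Nat.factorial_ne_zero _)
  have n2 : ((f.factorial : ℚ)) ≠ 0 := Nat.cast_ne_zero.mpr (Nat.factorial_ne_zero _)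
  have n3 : ((r.factorial : ℚ)) ≠ 0 := Nat.cast_ne_zero.mpr (Nat.factorial_ne_zero _)
  have n4 : ((e.factorial : ℚ)) ≠ 0 := Nat.cast_ne_zero.mpr (Nat.factorial_ne_zero _)
  have n5 : ((g.factorial : ℚ)) ≠ 0 := Nat.cast_ne_zero.mpr (Nat.factorial_ne_zero _)
  have n6 : (((r+e+f).factorial : ℚ)) ≠ 0 := Nat.cast_ne_zero.mpr (Nat.factorial_ne_zero _)
  have n7 : (((2*f+d).factorial : ℚ)) ≠ 0 := Nat.cast_ne_zero.mpr (Nat.factorial_ne_zero _)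
  have n8 : (((d+f).factorial : ℚ)) ≠ 0 := Nat.cast_ne_zero.mpr (Nat.factorial_ne_zero _)
  have n9 : (((r+e).factorial : ℚ)) ≠ 0 := Nat.cast_ne_zero.mpr (Nat.factorial_ne_zero _)
  have hdf : (((d+f).factorial : ℚ)) = (((f+d).factorial : ℚ)) := by rw [Nat.add_comm d f]
  field_simp
  rw [hdf]

lemma key0 (s k j r : ℕ) (hs : 1 ≤ s) (hk : s ≤ k) (hj : j ≤ s) (hr : r ≤ j) :
    ((k+s-2*j).choose (s-j) : ℚ) * ((k+s-2*j+r).choose r : ℚ) * ((k-j+1).choose (j-r) : ℚ)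
      = ((k:ℚ)+1-j)/((j.factorial : ℚ) * ((s-j).factorial : ℚ)) * (j.choose r : ℚ)
        * (((k+s-2*j+r).descFactorial (s-1)) : ℚ) := by
  rcases le_or_gt (2*j) (k+r+1) with hcase | hcase
  · have w1 : k+s-2*j = 2*(s-j)+(k-s) := by omega
    have w2 : k-j+1 = (j-r)+(k+r+1-2*j) := by omega
    have wc : (j.choose r : ℚ) = ((r+(j-r)).choose r : ℚ) := by congr 2; omega
    have wf : (j.factorial : ℚ) = ((r+(j-r)).factorial : ℚ) := by congr 2; omega
    have wd : (k:ℚ)+1-j = ((k-s:ℕ):ℚ)+((s-j:ℕ):ℚ)+1 := by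
      rw [Nat.cast_sub hk, Nat.cast_sub hj]; ring
    rw [w1, w2, wc, wf, wd]
    exact key0' r (j-r) (s-j) (k-s) (k+r+1-2*j) (s-1) (by omega) (by omega)
  · rw [Nat.choose_eq_zero_of_lt (show k-j+1 < j-r by omega),
      Nat.descFactorial_of_lt (show k+s-2*j+r < s-1 by omega)]
    push_cast
    ring

lemma key1 (s k j r : ℕ) (hk : s+1 ≤ k) (hj : j ≤ s) (hr : r ≤ j) :
    ((k+s-2*j-1).choose (s-j) : ℚ) * ((k+s-2*j-1+r).choose r : ℚ) * ((k-j-1).choose (j-r) : ℚ)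
      = 1/((j.factorial : ℚ) * ((s-j).factorial : ℚ)) * (j.choose r : ℚ)
        * (((k+s-2*j-1+r).descFactorial s) : ℚ) := by
  rcases le_or_gt (2*j+1) (k+r) with hcase | hcase
  · have w1 : k+s-2*j-1 = 2*(s-j)+(k-s-1) := by omega
    have w2 : k-j-1 = (j-r)+(k+r-1-2*j) := by omega
    have wc : (j.choose r : ℚ) = ((r+(j-r)).choose r : ℚ) := by congr 2; omega
    have wf : (j.factorial : ℚ) = ((r+(j-r)).factorial : ℚ) := by congr 2; omega
    have ws : (k+s-2*j-1+r).descFactorial s = (2*(s-j)+(k-s-1)+r).descFactorial (r+(j-r)+(s-j)) := by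
      congr 1 <;> omega
    rw [ws, w1, w2, wc, wf]
    exact key1' r (j-r) (s-j) (k-s-1) (k+r-1-2*j) (by omega)
  · rw [Nat.choose_eq_zero_of_lt (show k-j-1 < j-r by omega),
      Nat.descFactorial_of_lt (show k+s-2*j-1+r < s by omega)]
    push_cast
    ring

lemma AI0 (s k : ℕ) (hs : 1 ≤ s) (hk : s ≤ k) (lam : ℚ) :
    Afun 0 s k lam = ∑ q ∈ range (s+1), ∑ r ∈ range (q+1),
      (-1:ℚ)^r * lam^r * (q.choose r : ℚ) * ((k:ℚ)+1-q)
        / ((q.factorial:ℚ)*((s-q).factorial:ℚ))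
        * ((k+s-2*q+r).descFactorial (s-1) : ℚ) := by
  rw [Ared0 s k hs hk lam]
  refine Finset.sum_congr rfl ?_
  intro q hq; rw [mem_range] at hq
  refine Finset.sum_congr rfl ?_
  intro r hr; rw [mem_range] at hr
  have hkey := key0 s k q r hs hk (by omega) (by omega)
  rw [neg_pow lam r]
  linear_combination ((-1:ℚ)^r * lam^r) * hkey

lemma AI1 (s k : ℕ) (hk : s+1 ≤ k) (lam : ℚ) :
    Afun 1 s k lam = ∑ q ∈ range (s+1), ∑ r ∈ range (q+1),
      -((-1:ℚ)^r * lam^r * (q.choose r : ℚ)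
        / ((q.factorial:ℚ)*((s-q).factorial:ℚ))
        * ((k+s-2*q-1+r).descFactorial s : ℚ)) := by
  rw [Ared1 s k hk lam]
  refine Finset.sum_congr rfl ?_
  intro q hq; rw [mem_range] at hq
  refine Finset.sum_congr rfl ?_
  intro r hr; rw [mem_range] at hr
  have hkey := key1 s k q r hk (by omega) (by omega)
  rw [neg_pow lam r]
  linear_combination (-(-1:ℚ)^r * lam^r) * hkey

lemma R0 (s k : ℕ) (hs : 1 ≤ s) (hk : s ≤ k) (lam : ℚ) :
    Afun 0 s k lam = ∑ q ∈ range (s+1),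
      (-1:ℚ)^q * ((k:ℚ)+1-q) / ((q.factorial:ℚ)*((s-q).factorial:ℚ))
        * Qfun q (s-1) ((k:ℚ)+1-q) lam := by
  rw [AI0 s k hs hk lam]
  refine Finset.sum_congr rfl ?_
  intro q hq; rw [mem_range] at hq
  have hb : (k:ℚ)+1-(q:ℚ) = ((k+s-2*q:ℕ):ℚ) + (q:ℚ) - ((s-1:ℕ):ℚ) := by
    rw [Nat.cast_sub (show 2*q ≤ k+s by omega), Nat.cast_sub hs]
    push_cast; ring
  have hQ : Qfun q (s-1) ((k:ℚ)+1-(q:ℚ)) lam = ∑ r ∈ range (q+1),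
      (q.choose r : ℚ) * lam^r * (-1:ℚ)^(q-r) * ((r+(k+s-2*q)).descFactorial (s-1) : ℚ) := by
    rw [hb]
    exact Qfun_eq (s-1) q (k+s-2*q) lam
  rw [hQ, Finset.mul_sum]
  refine Finset.sum_congr rfl ?_
  intro r hr; rw [mem_range] at hr
  have hd : ((r+(k+s-2*q)).descFactorial (s-1) : ℚ)
      = ((k+s-2*q+r).descFactorial (s-1) : ℚ) := by congr 2; omega
  have hsgn : (-1:ℚ)^q * (-1:ℚ)^(q-r) = (-1:ℚ)^r := by
    rw [← pow_add, show q+(q-r) = 2*(q-r)+r by omega, pow_add, pow_mul]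
    norm_num
  rw [hd]
  linear_combination (-((k:ℚ)+1-q)/((q.factorial:ℚ)*((s-q).factorial:ℚ))
    * (q.choose r : ℚ) * lam^r * ((k+s-2*q+r).descFactorial (s-1) : ℚ)) * hsgn

lemma R1 (s k : ℕ) (hk : s+1 ≤ k) (lam : ℚ) :
    Afun 1 s k lam = ∑ q ∈ range (s+1),
      (-1:ℚ)^(q+1) / ((q.factorial:ℚ)*((s-q).factorial:ℚ))
        * Qfun q s ((k:ℚ)-1-q) lam := by
  rw [AI1 s k hk lam]
  refine Finset.sum_congr rfl ?_
  intro q hq; rw [mem_range] at hq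
  have hb : (k:ℚ)-1-(q:ℚ) = ((k+s-1-2*q:ℕ):ℚ) + (q:ℚ) - (s:ℚ) := by
    rw [Nat.cast_sub (show 2*q ≤ k+s-1 by omega), Nat.cast_sub (show 1 ≤ k+s by omega)]
    push_cast; ring
  have hQ : Qfun q s ((k:ℚ)-1-(q:ℚ)) lam = ∑ r ∈ range (q+1),
      (q.choose r : ℚ) * lam^r * (-1:ℚ)^(q-r) * ((r+(k+s-1-2*q)).descFactorial s : ℚ) := by
    rw [hb]
    exact Qfun_eq s q (k+s-1-2*q) lam
  rw [hQ, Finset.mul_sum]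
  refine Finset.sum_congr rfl ?_
  intro r hr; rw [mem_range] at hr
  have hd : ((r+(k+s-1-2*q)).descFactorial s : ℚ)
      = ((k+s-2*q-1+r).descFactorial s : ℚ) := by congr 2; omega
  have hsgn : (-1:ℚ)^(q+1) * (-1:ℚ)^(q-r) = -(-1:ℚ)^r := by
    rw [← pow_add, show (q+1)+(q-r) = 2*(q-r)+r+1 by omega, pow_add, pow_add, pow_mul]
    norm_num
  rw [hd]
  linear_combination (-(1:ℚ)/((q.factorial:ℚ)*((s-q).factorial:ℚ))
    * (q.choose r : ℚ) * lam^r * ((k+s-2*q-1+r).descFactorial s : ℚ)) * hsgn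

noncomputable def rfac (c : ℚ) (n : ℕ) : Polynomial ℚ := ∏ i ∈ range n, (X + C (c - i))

lemma rfac_monic (c : ℚ) (n : ℕ) : (rfac c n).Monic :=
  monic_prod_of_monic _ _ fun i _ => monic_X_add_C _

lemma rfac_natDegree (c : ℚ) (n : ℕ) : (rfac c n).natDegree = n := by
  rw [rfac, natDegree_prod_of_monic _ _ (fun i _ => monic_X_add_C _)]
  have h : ∀ i ∈ range n, (X + C (c - i)).natDegree = 1 := fun i _ => natDegree_X_add_C _
  rw [Finset.sum_congr rfl h, Finset.sum_const, card_range, smul_eq_mul, mul_one]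

lemma rfac_eval (x c : ℚ) (n : ℕ) : (rfac c n).eval x = ffall (x+c) n := by
  rw [rfac, eval_prod, ffall]
  refine Finset.prod_congr rfl ?_
  intro i _
  simp only [eval_add, eval_X, eval_C]
  ring

lemma sumA (q : ℕ) (lam : ℚ) :
    ∑ r ∈ range (q+1), (-1:ℚ)^r * lam^r * (q.choose r : ℚ) = (1-lam)^q := by
  have h := add_pow (-lam) (1:ℚ) q
  have h2 : ∑ r ∈ range (q+1), (-1:ℚ)^r * lam^r * (q.choose r : ℚ)
      = ∑ r ∈ range (q+1), (-lam)^r * (1:ℚ)^(q-r) * (q.choose r : ℚ) := by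
    refine Finset.sum_congr rfl ?_
    intro r _
    rw [neg_pow, one_pow]
    ring
  rw [h2, ← h]
  ring

lemma sumB (s : ℕ) (lam : ℚ) :
    ∑ q ∈ range (s+1), (1-lam)^q / ((q.factorial:ℚ)*((s-q).factorial:ℚ))
      = (2-lam)^s / (s.factorial : ℚ) := by
  have h2 : ∀ q ∈ range (s+1), (1-lam)^q / ((q.factorial:ℚ)*((s-q).factorial:ℚ))
      = ((1-lam)^q * (1:ℚ)^(s-q) * (s.choose q : ℚ)) / (s.factorial : ℚ) := by
    intro q hq
    rw [mem_range] at hq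
    have hcf : ((s.choose q : ℚ)) * (q.factorial:ℚ) * ((s-q).factorial:ℚ) = (s.factorial:ℚ) := by
      exact_mod_cast congrArg (Nat.cast (R:=ℚ)) (Nat.choose_mul_factorial_mul_factorial (show q ≤ s by omega))
    have n1 : ((q.factorial:ℚ)) ≠ 0 := Nat.cast_ne_zero.mpr (Nat.factorial_ne_zero _)
    have n2 : (((s-q).factorial:ℚ)) ≠ 0 := Nat.cast_ne_zero.mpr (Nat.factorial_ne_zero _)
    have n3 : ((s.factorial:ℚ)) ≠ 0 := Nat.cast_ne_zero.mpr (Nat.factorial_ne_zero _)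
    rw [one_pow]
    field_simp
    linear_combination (-(1-lam)^q) * hcf
  rw [Finset.sum_congr rfl h2, ← Finset.sum_div, ← add_pow]
  rw [show (1-lam+1 : ℚ) = 2-lam by ring]

lemma Poly0 (s : ℕ) (hs : 1 ≤ s) (lam : ℚ) :
    ∃ P : Polynomial ℚ, P.natDegree ≤ s ∧
      P.coeff s = (2 - lam)^s / (s.factorial : ℚ) ∧
      ∀ k : ℕ, s ≤ k → P.eval (k:ℚ) = Afun 0 s k lam := by
  refine ⟨∑ q ∈ range (s+1), ∑ r ∈ range (q+1),
    C ((-1:ℚ)^r * lam^r * (q.choose r : ℚ) / ((q.factorial:ℚ)*((s-q).factorial:ℚ)))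
      * ((X + C (1-(q:ℚ))) * rfac ((s:ℚ)-2*q+r) (s-1)), ?_, ?_, ?_⟩
  · refine natDegree_sum_le_of_forall_le _ _ ?_
    intro q _
    refine natDegree_sum_le_of_forall_le _ _ ?_
    intro r _
    refine le_trans (natDegree_C_mul_le _ _) ?_
    rw [(monic_X_add_C _).natDegree_mul (rfac_monic _ _), natDegree_X_add_C, rfac_natDegree]
    omega
  · rw [finset_sum_coeff]
    have hterm : ∀ q ∈ range (s+1), (∑ r ∈ range (q+1),
        C ((-1:ℚ)^r * lam^r * (q.choose r : ℚ) / ((q.factorial:ℚ)*((s-q).factorial:ℚ)))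
          * ((X + C (1-(q:ℚ))) * rfac ((s:ℚ)-2*q+r) (s-1))).coeff s
        = (1-lam)^q / ((q.factorial:ℚ)*((s-q).factorial:ℚ)) := by
      intro q hq
      rw [finset_sum_coeff]
      have h3 : ∀ r ∈ range (q+1),
          (C ((-1:ℚ)^r * lam^r * (q.choose r : ℚ) / ((q.factorial:ℚ)*((s-q).factorial:ℚ)))
            * ((X + C (1-(q:ℚ))) * rfac ((s:ℚ)-2*q+r) (s-1))).coeff s
          = (-1:ℚ)^r * lam^r * (q.choose r : ℚ) / ((q.factorial:ℚ)*((s-q).factorial:ℚ)) := by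
        intro r _
        rw [coeff_C_mul]
        have hM : ((X + C (1-(q:ℚ))) * rfac ((s:ℚ)-2*q+r) (s-1)).Monic :=
          (monic_X_add_C _).mul (rfac_monic _ _)
        have hd : ((X + C (1-(q:ℚ))) * rfac ((s:ℚ)-2*q+r) (s-1)).natDegree = s := by
          rw [(monic_X_add_C _).natDegree_mul (rfac_monic _ _), natDegree_X_add_C,
            rfac_natDegree]
          omega
        have := hM.coeff_natDegree
        rw [hd] at this
        rw [this, mul_one]
      rw [Finset.sum_congr rfl h3]
      rw [← Finset.sum_div, sumA]
    rw [Finset.sum_congr rfl hterm, sumB]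
  · intro k hk
    rw [AI0 s k hs hk lam, eval_finset_sum]
    refine Finset.sum_congr rfl ?_
    intro q hq
    rw [mem_range] at hq
    rw [eval_finset_sum]
    refine Finset.sum_congr rfl ?_
    intro r hr
    rw [mem_range] at hr
    rw [eval_mul, eval_C, eval_mul, eval_add, eval_X, eval_C, rfac_eval]
    have hcast : (k:ℚ) + ((s:ℚ)-2*q+r) = ((k+s-2*q+r : ℕ):ℚ) := by
      have : ((k+s-2*q+r : ℕ):ℚ) = ((k+s-2*q:ℕ):ℚ) + r := by push_cast; ring
      rw [this, Nat.cast_sub (show 2*q ≤ k+s by omega)]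
      push_cast; ring
    rw [hcast, ffall_natCast]
    ring

lemma Poly1 (s : ℕ) (lam : ℚ) :
    ∃ P : Polynomial ℚ, P.natDegree ≤ s ∧
      P.coeff s = -((2 - lam)^s / (s.factorial : ℚ)) ∧
      ∀ k : ℕ, s+1 ≤ k → P.eval (k:ℚ) = Afun 1 s k lam := by
  refine ⟨∑ q ∈ range (s+1), ∑ r ∈ range (q+1),
    C (-((-1:ℚ)^r * lam^r * (q.choose r : ℚ) / ((q.factorial:ℚ)*((s-q).factorial:ℚ))))
      * rfac ((s:ℚ)-2*q-1+r) s, ?_, ?_, ?_⟩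
  · refine natDegree_sum_le_of_forall_le _ _ ?_
    intro q _
    refine natDegree_sum_le_of_forall_le _ _ ?_
    intro r _
    refine le_trans (natDegree_C_mul_le _ _) ?_
    rw [rfac_natDegree]
  · rw [finset_sum_coeff]
    have hterm : ∀ q ∈ range (s+1), (∑ r ∈ range (q+1),
        C (-((-1:ℚ)^r * lam^r * (q.choose r : ℚ) / ((q.factorial:ℚ)*((s-q).factorial:ℚ))))
          * rfac ((s:ℚ)-2*q-1+r) s).coeff s
        = -((1-lam)^q / ((q.factorial:ℚ)*((s-q).factorial:ℚ))) := by
      intro q hq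
      rw [finset_sum_coeff]
      have h3 : ∀ r ∈ range (q+1),
          (C (-((-1:ℚ)^r * lam^r * (q.choose r : ℚ) / ((q.factorial:ℚ)*((s-q).factorial:ℚ))))
            * rfac ((s:ℚ)-2*q-1+r) s).coeff s
          = -((-1:ℚ)^r * lam^r * (q.choose r : ℚ) / ((q.factorial:ℚ)*((s-q).factorial:ℚ))) := by
        intro r _
        rw [coeff_C_mul]
        have := (rfac_monic ((s:ℚ)-2*q-1+r) s).coeff_natDegree
        rw [rfac_natDegree] at this
        rw [this, mul_one]
      rw [Finset.sum_congr rfl h3, Finset.sum_neg_distrib, ← Finset.sum_div, sumA]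
    rw [Finset.sum_congr rfl hterm, Finset.sum_neg_distrib, sumB]
  · intro k hk
    rw [AI1 s k hk lam, eval_finset_sum]
    refine Finset.sum_congr rfl ?_
    intro q hq
    rw [mem_range] at hq
    rw [eval_finset_sum]
    refine Finset.sum_congr rfl ?_
    intro r hr
    rw [mem_range] at hr
    rw [eval_mul, eval_C, rfac_eval]
    have hcast : (k:ℚ) + ((s:ℚ)-2*q-1+r) = ((k+s-2*q-1+r : ℕ):ℚ) := by
      have : ((k+s-2*q-1+r : ℕ):ℚ) = ((k+s-2*q-1:ℕ):ℚ) + r := by push_cast; ring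
      rw [this, Nat.cast_sub (show 1 ≤ k+s-2*q by omega), Nat.cast_sub (show 2*q ≤ k+s by omega)]
      push_cast; ring
    rw [hcast, ffall_natCast]
    ring

/-- For `α ∈ {0,1}`, `s ≥ 1-α` and `k ≥ s+α`, the sum `A_{α,s,k}(λ)` equals the
stated expression in the `Q_{q,·}`, and consequently it is, for `k ≥ s+α`, the
restriction of a polynomial in `k` of degree at most `s` whose coefficient of
`k^s` is `(-1)^α (2-λ)^s/s!`. -/
theorem Afun_eq (α s : ℕ) (hα : α ≤ 1) (hs : 1 ≤ s + α) (lam : ℚ) :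
    (α = 0 → ∀ k : ℕ, s ≤ k → Afun 0 s k lam =
      ∑ q ∈ Finset.range (s + 1),
        (-1 : ℚ) ^ q * ((k : ℚ) + 1 - q) / ((q.factorial : ℚ) * ((s - q).factorial : ℚ))
          * Qfun q (s - 1) ((k : ℚ) + 1 - q) lam) ∧
    (α = 1 → ∀ k : ℕ, s + 1 ≤ k → Afun 1 s k lam =
      ∑ q ∈ Finset.range (s + 1),
        (-1 : ℚ) ^ (q + 1) / ((q.factorial : ℚ) * ((s - q).factorial : ℚ))
          * Qfun q s ((k : ℚ) - 1 - q) lam) ∧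
    (∃ P : Polynomial ℚ, P.natDegree ≤ s ∧
      P.coeff s = (-1 : ℚ) ^ α * (2 - lam) ^ s / (s.factorial : ℚ) ∧
      ∀ k : ℕ, s + α ≤ k → P.eval (k : ℚ) = Afun α s k lam) := by
  refine ⟨?_, ?_, ?_⟩
  · intro h0 k hk
    have hs0 : 1 ≤ s := by omega
    exact R0 s k hs0 hk lam
  · intro _ k hk
    exact R1 s k hk lam
  · interval_cases α
    · have hs0 : 1 ≤ s := by omega
      obtain ⟨P, h1, h2, h3⟩ := Poly0 s hs0 lam
      refine ⟨P, h1, ?_, ?_⟩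
      · rw [h2]; ring
      · intro k hk; exact h3 k (by omega)
    · obtain ⟨P, h1, h2, h3⟩ := Poly1 s lam
      refine ⟨P, h1, ?_, ?_⟩
      · rw [h2]; ring
      · intro k hk; exact h3 k (by omega)
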